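/- Let A_l ∈ ℂ^{n×n} (1 ≤ l ≤ N) be Hermitian positive semidefinite matrices, and let a_l ∈ ℂ and b_l ∈ ℝ satisfy |a_l| ≤ b_l for every l. Then ‖ Σ_{l=1}^N a_l A_l ‖ ≤ ‖ Σ_{l=1}^N b_l A_l ‖, where ‖·‖ is the spectral norm. -/

import Mathlib

/-!
Statement 12 (Lemma: spectral norm bound for complex combinations of PSD matrices).
-/

open Matrix
open scoped ComplexOrder

noncomputable section

/-- Spectral (ℓ²-operator) norm of a complex matrix. -/
noncomputable def specNorm {m n : ℕ} (M : Matrix (Fin m) (Fin n) ℂ) : ℝ :=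
  ‖LinearMap.toContinuousLinearMap (Matrix.toEuclideanLin M)‖

open scoped InnerProductSpace in
/-- If `A_l` are Hermitian positive semidefinite and `|a_l| ≤ b_l`,
then `‖Σ a_l A_l‖ ≤ ‖Σ b_l A_l‖` in spectral norm. -/
theorem specNorm_sum_smul_posSemidef_le
    (n N : ℕ) (A : Fin N → Matrix (Fin n) (Fin n) ℂ)
    (hA : ∀ l, (A l).PosSemidef)
    (a : Fin N → ℂ) (b : Fin N → ℝ) (hab : ∀ l, ‖a l‖ ≤ b l) :
    specNorm (∑ l, a l • A l) ≤ specNorm (∑ l, (b l : ℂ) • A l) := by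
  classical
  have hb : ∀ l, 0 ≤ b l := fun l => le_trans (norm_nonneg _) (hab l)
  set φ := Matrix.toEuclideanCLM (n := Fin n) (𝕜 := ℂ) with hφ
  open scoped MatrixOrder Matrix.Norms.L2Operator in
  set B : Fin N → Matrix (Fin n) (Fin n) ℂ := fun l => CFC.sqrt (A l) with hBdef
  open scoped MatrixOrder Matrix.Norms.L2Operator in
  have hBB : ∀ l, B l * B l = A l := fun l => CFC.sqrt_mul_sqrt_self (A l) (Matrix.nonneg_iff_posSemidef.mpr (hA l))
  have hBadj : ∀ l, ContinuousLinearMap.adjoint (φ (B l)) = φ (B l) := by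
    intro l
    open scoped MatrixOrder Matrix.Norms.L2Operator in
    have : star (B l) = B l := (IsSelfAdjoint.of_nonneg (CFC.sqrt_nonneg (A l))).star_eq
    calc ContinuousLinearMap.adjoint (φ (B l)) = star (φ (B l)) := rfl
      _ = φ (star (B l)) := (map_star φ (B l)).symm
      _ = φ (B l) := by rw [this]
  have hinner : ∀ l (x y : EuclideanSpace ℂ (Fin n)),
      (inner ℂ x (φ (A l) y) : ℂ) = inner ℂ (φ (B l) x) (φ (B l) y) := by
    intro l x y
    rw [← hBB l, _root_.map_mul]
    rw [ContinuousLinearMap.mul_apply, ← ContinuousLinearMap.adjoint_inner_left, hBadj]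
  set T := φ (∑ l, a l • A l) with hT
  set S := φ (∑ l, (b l : ℂ) • A l) with hS
  -- expansion of applied sums
  have hTapp : ∀ (x y : EuclideanSpace ℂ (Fin n)),
      (inner ℂ x (T y) : ℂ) = ∑ l, a l * inner ℂ x (φ (A l) y) := by
    intro x y
    rw [hT, map_sum, ContinuousLinearMap.sum_apply, inner_sum]
    congr 1; funext l
    rw [_root_.map_smul, ContinuousLinearMap.smul_apply, inner_smul_right]
  have hSapp : ∀ (x y : EuclideanSpace ℂ (Fin n)),
      (inner ℂ x (S y) : ℂ) = ∑ l, (b l : ℂ) * inner ℂ x (φ (A l) y) := by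
    intro x y
    rw [hS, map_sum, ContinuousLinearMap.sum_apply, inner_sum]
    congr 1; funext l
    rw [_root_.map_smul, ContinuousLinearMap.smul_apply, inner_smul_right]
  -- quadratic form bound: Σ b l * ‖φ(B l) x‖² ≤ ‖S‖ * ‖x‖²
  have hquad : ∀ x : EuclideanSpace ℂ (Fin n),
      ∑ l, b l * ‖φ (B l) x‖ ^ 2 ≤ ‖S‖ * ‖x‖ ^ 2 := by
    intro x
    have h1 : (∑ l, (b l : ℂ) * ‖φ (B l) x‖ ^ 2) = inner ℂ x (S x) := by
      rw [hSapp]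
      congr 1; funext l
      rw [hinner l x x, inner_self_eq_norm_sq_to_K]
      norm_cast
      exact Complex.ofReal_mul _ _
    have h2 : ∑ l, b l * ‖φ (B l) x‖ ^ 2 = Complex.re (inner ℂ x (S x) : ℂ) := by
      rw [← h1]
      rw [Complex.re_sum]
      congr 1; funext l
      rw [← Complex.ofReal_pow, ← Complex.ofReal_mul, Complex.ofReal_re]
    rw [h2]
    calc Complex.re (inner ℂ x (S x) : ℂ) ≤ ‖(inner ℂ x (S x) : ℂ)‖ := Complex.re_le_norm _
      _ ≤ ‖x‖ * ‖S x‖ := norm_inner_le_norm _ _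
      _ ≤ ‖x‖ * (‖S‖ * ‖x‖) := by
          gcongr; exact S.le_opNorm x
      _ = ‖S‖ * ‖x‖ ^ 2 := by ring
  -- key bilinear bound
  have key : ∀ x y : EuclideanSpace ℂ (Fin n),
      ‖(inner ℂ x (T y) : ℂ)‖ ≤ ‖S‖ * (‖x‖ * ‖y‖) := by
    intro x y
    have hnn : ∀ l : Fin N, (0:ℝ) ≤ b l * ‖φ (B l) x‖ ^ 2 := fun l => mul_nonneg (hb l) (by positivity)
    have hnn' : ∀ l : Fin N, (0:ℝ) ≤ b l * ‖φ (B l) y‖ ^ 2 := fun l => mul_nonneg (hb l) (by positivity)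
    calc ‖(inner ℂ x (T y) : ℂ)‖ = ‖∑ l, a l * inner ℂ x (φ (A l) y)‖ := by rw [hTapp]
      _ ≤ ∑ l, ‖a l * (inner ℂ x (φ (A l) y) : ℂ)‖ := norm_sum_le _ _
      _ ≤ ∑ l, b l * (‖φ (B l) x‖ * ‖φ (B l) y‖) := by
          refine Finset.sum_le_sum fun l _ => ?_
          rw [norm_mul, hinner]
          exact mul_le_mul (hab l) (norm_inner_le_norm _ _) (norm_nonneg _) (hb l)
      _ = ∑ l, Real.sqrt (b l * ‖φ (B l) x‖ ^ 2) * Real.sqrt (b l * ‖φ (B l) y‖ ^ 2) := by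
          congr 1; funext l
          rw [Real.sqrt_mul (hb l), Real.sqrt_mul (hb l), Real.sqrt_sq (norm_nonneg _),
            Real.sqrt_sq (norm_nonneg _)]
          linear_combination (-(‖φ (B l) x‖ * ‖φ (B l) y‖)) * Real.sq_sqrt (hb l)
      _ ≤ Real.sqrt (∑ l, b l * ‖φ (B l) x‖ ^ 2) * Real.sqrt (∑ l, b l * ‖φ (B l) y‖ ^ 2) :=
          Real.sum_sqrt_mul_sqrt_le _ hnn hnn'
      _ ≤ Real.sqrt (‖S‖ * ‖x‖ ^ 2) * Real.sqrt (‖S‖ * ‖y‖ ^ 2) := by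
          gcongr
          · exact hquad x
          · exact hquad y
      _ = ‖S‖ * (‖x‖ * ‖y‖) := by
          rw [Real.sqrt_mul (norm_nonneg S), Real.sqrt_mul (norm_nonneg S),
            Real.sqrt_sq (norm_nonneg x), Real.sqrt_sq (norm_nonneg y)]
          linear_combination (‖x‖ * ‖y‖) * Real.sq_sqrt (norm_nonneg S)
  -- conclude operator norm bound
  have hfinal : ‖T‖ ≤ ‖S‖ := by
    refine ContinuousLinearMap.opNorm_le_bound _ (norm_nonneg S) fun y => ?_
    rcases eq_or_ne (‖T y‖) 0 with h | h
    · rw [h]; positivity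
    · have h1 : ‖T y‖ * ‖T y‖ ≤ (‖S‖ * ‖y‖) * ‖T y‖ := by
        have := key (T y) y
        calc ‖T y‖ * ‖T y‖ = ‖(inner ℂ (T y) (T y) : ℂ)‖ := by
              rw [inner_self_eq_norm_sq_to_K]
              simp [norm_pow, sq]
          _ ≤ ‖S‖ * (‖T y‖ * ‖y‖) := this
          _ = (‖S‖ * ‖y‖) * ‖T y‖ := by ring
      exact le_of_mul_le_mul_right h1 (lt_of_le_of_ne (norm_nonneg _) (Ne.symm h))
  exact hfinal

end
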